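/- Let n ≥ 1. There exist ε > 0 and a function Φ : B_ε(0) ⊆ ℝ^n → ℝ of class C² with Φ(0) = 0, ∇Φ(0) = 0, D²Φ(0) = 0 and Φ ≤ 0, such that for every (x,t) with |x| < ε and −ε² < t < 0 one has: (x,t) ∈ E(1) if and only if t ≤ Φ(x). That is, in a neighborhood of the origin the boundary of the heat ball E(1) is the graph t = Φ(x) of a C² function whose value, gradient and Hessian all vanish at 0. -/

import Mathlib

open MeasureTheory Real Set Metric Filter

noncomputable section

/-- The space ℝ^n × ℝ (spatial × time). -/
abbrev Spc (n : ℕ) := EuclideanSpace ℝ (Fin n) × ℝ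

/-- Parabolic cylinder C_r(Y) = B_r(y) × (s - r², s). -/
def pCyl (n : ℕ) (Y : Spc n) (r : ℝ) : Set (Spc n) :=
  (Metric.ball Y.1 r) ×ˢ (Set.Ioo (Y.2 - r ^ 2) Y.2)

/-- |C_r|: the measure of a parabolic cylinder of radius r. -/
def cylVol (n : ℕ) (r : ℝ) : ENNReal :=
  volume (pCyl n ((0 : EuclideanSpace ℝ (Fin n)), (0 : ℝ)) r)

/-- The parabolic boundary of an open set Q. -/
def pBoundary (n : ℕ) (Q : Set (Spc n)) : Set (Spc n) :=
  {X | X ∈ frontier Q ∧ ∃ δ > (0 : ℝ), ∃ γ : ℝ → EuclideanSpace ℝ (Fin n),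
    ContinuousOn γ (Set.Ico X.2 (X.2 + δ)) ∧ γ X.2 = X.1 ∧
    ∀ t ∈ Set.Ioo X.2 (X.2 + δ), (γ t, t) ∈ Q}

/-- Condition (A): exterior measure condition. -/
def condA (n : ℕ) (Q : Set (Spc n)) (θ₀ : ℝ) : Prop :=
  ∀ X ∈ pBoundary n Q, ∀ r > (0 : ℝ),
    ENNReal.ofReal θ₀ * cylVol n r < volume (pCyl n X r \ Q)

/-- Parabolic distance. -/
def pDist (n : ℕ) (X Y : Spc n) : ℝ := max ‖X.1 - Y.1‖ (Real.sqrt |X.2 - Y.2|)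

/-- The fundamental solution of the heat equation. -/
def heatF (n : ℕ) (x : EuclideanSpace ℝ (Fin n)) (t : ℝ) : ℝ :=
  if 0 < t then (4 * π * t) ^ (-(n : ℝ) / 2) * Real.exp (-‖x‖ ^ 2 / (4 * t)) else 0

/-- Heat ball E(X, r). -/
def heatBall (n : ℕ) (X : Spc n) (r : ℝ) : Set (Spc n) :=
  {Y | r ≤ heatF n (X.1 - Y.1) (X.2 - Y.2)}

/-- Thermal capacity of a set. -/
def thermalCap (n : ℕ) (K : Set (Spc n)) : ENNReal :=
  sSup {m : ENNReal | ∃ μ : Measure (Spc n), IsFiniteMeasure μ ∧ μ Kᶜ = 0 ∧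
    (∀ X : Spc n, ∫⁻ Y, ENNReal.ofReal (heatF n (X.1 - Y.1) (X.2 - Y.2)) ∂μ ≤ 1) ∧
    m = μ Set.univ}

/-- Heat shell {Y : a ≤ F(Y₀ - Y) ≤ b}. -/
def heatShell (n : ℕ) (Y₀ : Spc n) (a b : ℝ) : Set (Spc n) :=
  {Y | a ≤ heatF n (Y₀.1 - Y.1) (Y₀.2 - Y.2) ∧ heatF n (Y₀.1 - Y.1) (Y₀.2 - Y.2) ≤ b}


set_option synthInstance.maxHeartbeats 1000000
set_option maxHeartbeats 2000000
namespace HBG5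

def cc (n : ℕ) : ℝ := 2 * n
def gg (n : ℕ) (τ : ℝ) : ℝ := -(cc n / (4 * π)) * ((4 * π * τ) * Real.log (4 * π * τ))
def tau1 : ℝ := (Real.exp 2 * (4 * π))⁻¹
def s1 (n : ℕ) : ℝ := gg n tau1
def hh (n : ℕ) (s : ℝ) : ℝ := sSup {τ | τ ∈ Set.Icc 0 tau1 ∧ gg n τ ≤ s}
def dd (n : ℕ) (s : ℝ) : ℝ :=
  if s ≤ 0 then 0 else (cc n * (-Real.log (4 * π * hh n s) - 1))⁻¹
def ee (n : ℕ) (s : ℝ) : ℝ := if s ≤ 0 then 0 else cc n * dd n s ^ 3 / hh n s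

variable {n : ℕ}

lemma pi4_pos : (0:ℝ) < 4 * π := by positivity

lemma cc_ge (hn : 1 ≤ n) : (2:ℝ) ≤ cc n := by
  have : (1:ℝ) ≤ n := by exact_mod_cast hn
  simp only [cc]; nlinarith

lemma cc_pos (hn : 1 ≤ n) : (0:ℝ) < cc n := lt_of_lt_of_le (by norm_num) (cc_ge hn)

lemma tau1_pos : (0:ℝ) < tau1 := by
  have := pi4_pos; have := Real.exp_pos 2; unfold tau1; positivity

lemma four_pi_tau1 : 4 * π * tau1 = (Real.exp 2)⁻¹ := by
  have h1 : (4:ℝ) * π ≠ 0 := ne_of_gt pi4_pos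
  have h2 : Real.exp 2 ≠ 0 := (Real.exp_pos 2).ne'
  unfold tau1; field_simp

lemma log_tau1 : Real.log (4 * π * tau1) = -2 := by
  rw [four_pi_tau1, Real.log_inv, Real.log_exp]

lemma gg_eq (n : ℕ) (τ : ℝ) : gg n τ = cc n * τ * (-Real.log (4 * π * τ)) := by
  have h1 : (4:ℝ) * π ≠ 0 := ne_of_gt pi4_pos
  unfold gg; field_simp

lemma gg_zero : gg n 0 = 0 := by simp [gg]

lemma gg_cont : Continuous (gg n) :=
  continuous_const.mul (Real.continuous_mul_log.comp (continuous_const.mul continuous_id))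

lemma log_le_on (τ : ℝ) (h0 : 0 < τ) (h1 : τ ≤ tau1) : Real.log (4 * π * τ) ≤ -2 := by
  rw [← log_tau1]
  exact Real.log_le_log (by positivity) (by nlinarith [pi4_pos])

lemma gg_deriv (τ : ℝ) (h0 : 0 < τ) :
    HasDerivAt (gg n) (cc n * (-Real.log (4 * π * τ) - 1)) τ := by
  have hne : 4 * π * τ ≠ 0 := by positivity
  have h1 : HasDerivAt (fun x : ℝ => x * Real.log x) (Real.log (4 * π * τ) + 1) (4 * π * τ) :=
    Real.hasDerivAt_mul_log hne
  have h2 : HasDerivAt (fun τ : ℝ => 4 * π * τ) (4 * π) τ := by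
    simpa using (hasDerivAt_id τ).const_mul (4 * π)
  have h3 := (h1.comp τ h2).const_mul (-(cc n / (4 * π)))
  have h4 : -(cc n / (4 * π)) * ((Real.log (4 * π * τ) + 1) * (4 * π)) =
      cc n * (-Real.log (4 * π * τ) - 1) := by
    have : (4:ℝ) * π ≠ 0 := ne_of_gt pi4_pos
    field_simp; ring
  rw [h4] at h3
  exact h3


lemma gg_strictMono (hn : 1 ≤ n) : StrictMonoOn (gg n) (Set.Icc 0 tau1) := by
  apply strictMonoOn_of_deriv_pos (convex_Icc 0 tau1) gg_cont.continuousOn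
  intro τ hτ
  rw [interior_Icc] at hτ
  rw [(gg_deriv τ hτ.1).deriv]
  have hlog := log_le_on τ hτ.1 hτ.2.le
  have := cc_pos hn
  nlinarith

lemma gg_sub (hn : 1 ≤ n) {τ' τ : ℝ} (h1 : τ' ∈ Set.Icc 0 tau1) (h2 : τ ∈ Set.Icc 0 tau1)
    (h : τ' ≤ τ) : cc n * (τ - τ') ≤ gg n τ - gg n τ' := by
  have hmono : MonotoneOn (fun τ => gg n τ - cc n * τ) (Set.Icc 0 tau1) := by
    apply monotoneOn_of_deriv_nonneg (convex_Icc 0 tau1)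
      (gg_cont.continuousOn.sub (continuous_const.mul continuous_id).continuousOn)
    · intro τ hτ
      rw [interior_Icc] at hτ
      exact ((gg_deriv τ hτ.1).sub (by simpa using (hasDerivAt_id τ).const_mul (cc n) : HasDerivAt (fun y => cc n * y) (cc n) τ)).differentiableAt.differentiableWithinAt
    · intro τ hτ
      rw [interior_Icc] at hτ
      show 0 ≤ deriv (fun τ => gg n τ - cc n * τ) τ
      rw [show deriv (fun τ => gg n τ - cc n * τ) τ = _ from ((gg_deriv τ hτ.1).sub (by simpa using (hasDerivAt_id τ).const_mul (cc n) : HasDerivAt (fun y => cc n * y) (cc n) τ)).deriv]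
      have hlog := log_le_on τ hτ.1 hτ.2.le
      have := cc_pos hn
      nlinarith
  have := hmono h1 h2 h
  simp only at this
  linarith

lemma gg_ge2 (hn : 1 ≤ n) {τ : ℝ} (h : τ ∈ Set.Icc 0 tau1) : 2 * (cc n * τ) ≤ gg n τ := by
  rcases eq_or_lt_of_le h.1 with h0 | h0
  · rw [← h0, gg_zero]; simp
  · rw [gg_eq]
    have hlog := log_le_on τ h0 h.2
    have hc := cc_pos hn
    have h2 : (2:ℝ) ≤ -Real.log (4 * π * τ) := by linarith
    have := mul_le_mul_of_nonneg_left h2 (by positivity : (0:ℝ) ≤ cc n * τ)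
    nlinarith

lemma gg_nonneg (hn : 1 ≤ n) {τ : ℝ} (h : τ ∈ Set.Icc 0 tau1) : 0 ≤ gg n τ := by
  have := gg_ge2 hn h
  have := cc_pos hn
  nlinarith [h.1]

lemma s1_eq : s1 n = 2 * (cc n * tau1) := by
  rw [s1, gg_eq, log_tau1]; ring

lemma s1_pos (hn : 1 ≤ n) : 0 < s1 n := by
  rw [s1_eq]; have := cc_pos hn; have := tau1_pos; positivity

lemma tau1_lt_s1 (hn : 1 ≤ n) : tau1 < s1 n := by
  rw [s1_eq]; have := cc_ge hn; have := tau1_pos; nlinarith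

lemma hh_isGreatest (hn : 1 ≤ n) {τ : ℝ} (h : τ ∈ Set.Icc 0 tau1) {s : ℝ} (hs : gg n τ = s) :
    IsGreatest {τ' | τ' ∈ Set.Icc 0 tau1 ∧ gg n τ' ≤ s} τ :=
  ⟨⟨h, le_of_eq hs⟩, fun τ' hτ' =>
    ((gg_strictMono hn).le_iff_le hτ'.1 h).1 (by rw [hs]; exact hτ'.2)⟩

lemma hh_eq (hn : 1 ≤ n) {τ : ℝ} (h : τ ∈ Set.Icc 0 tau1) {s : ℝ} (hs : gg n τ = s) :
    hh n s = τ :=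
  (hh_isGreatest hn h hs).csSup_eq

lemma hh_gg (hn : 1 ≤ n) {τ : ℝ} (h : τ ∈ Set.Icc 0 tau1) : hh n (gg n τ) = τ :=
  hh_eq hn h rfl

lemma hh_zero (hn : 1 ≤ n) : hh n 0 = 0 := by
  have := hh_gg hn (show (0:ℝ) ∈ Set.Icc 0 tau1 from ⟨le_refl _, tau1_pos.le⟩)
  rwa [gg_zero] at this

lemma hh_spec (hn : 1 ≤ n) {s : ℝ} (hs : s ∈ Set.Icc 0 (s1 n)) :
    hh n s ∈ Set.Icc 0 tau1 ∧ gg n (hh n s) = s := by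
  obtain ⟨τ, hτ, hgτ⟩ : ∃ τ ∈ Set.Icc 0 tau1, gg n τ = s := by
    have h := intermediate_value_Icc (f := gg n) tau1_pos.le gg_cont.continuousOn
    rw [gg_zero] at h
    obtain ⟨τ, hτ, hgτ⟩ := h (show s ∈ Set.Icc 0 (gg n tau1) from hs)
    exact ⟨τ, hτ, hgτ⟩
  rw [hh_eq hn hτ hgτ]
  exact ⟨hτ, hgτ⟩

lemma hh_le (hn : 1 ≤ n) {s : ℝ} (hs : s ∈ Set.Icc 0 (s1 n)) : 2 * (cc n * hh n s) ≤ s := by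
  obtain ⟨h1, h2⟩ := hh_spec hn hs
  calc 2 * (cc n * hh n s) ≤ gg n (hh n s) := gg_ge2 hn h1
  _ = s := h2

lemma hh_pos (hn : 1 ≤ n) {s : ℝ} (hs : s ∈ Set.Icc 0 (s1 n)) (h0 : 0 < s) : 0 < hh n s := by
  obtain ⟨h1, h2⟩ := hh_spec hn hs
  rcases eq_or_lt_of_le h1.1 with h | h
  · exfalso; rw [← h, gg_zero] at h2; linarith
  · exact h

lemma hh_mono_iff (hn : 1 ≤ n) {s τ : ℝ} (hs : s ∈ Set.Icc 0 (s1 n))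
    (hτ : τ ∈ Set.Icc 0 tau1) : s ≤ gg n τ ↔ hh n s ≤ τ := by
  obtain ⟨h1, h2⟩ := hh_spec hn hs
  conv_lhs => rw [← h2]
  exact (gg_strictMono hn).le_iff_le h1 hτ

lemma hh_lip (hn : 1 ≤ n) {s s' : ℝ} (hs : s ∈ Set.Icc 0 (s1 n)) (hs' : s' ∈ Set.Icc 0 (s1 n)) :
    cc n * |hh n s - hh n s'| ≤ |s - s'| := by
  wlog h : s' ≤ s generalizing s s'
  · rw [abs_sub_comm, abs_sub_comm s s']
    exact this hs' hs (le_of_not_ge h)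
  have hm : hh n s' ≤ hh n s := by
    rw [← hh_mono_iff hn hs' (hh_spec hn hs).1, (hh_spec hn hs).2]
    exact h
  rw [abs_of_nonneg (by linarith), abs_of_nonneg (by linarith)]
  have := gg_sub hn (hh_spec hn hs').1 (hh_spec hn hs).1 hm
  rw [(hh_spec hn hs).2, (hh_spec hn hs').2] at this
  linarith

lemma hh_contOn (hn : 1 ≤ n) : ContinuousOn (hh n) (Set.Icc 0 (s1 n)) := by
  have hc := cc_pos hn
  have : LipschitzOnWith (Real.toNNReal (cc n)⁻¹) (hh n) (Set.Icc 0 (s1 n)) := by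
    rw [lipschitzOnWith_iff_dist_le_mul]
    intro x hx y hy
    rw [Real.dist_eq, Real.dist_eq, Real.coe_toNNReal _ (by positivity)]
    have := hh_lip hn hx hy
    rw [inv_mul_eq_div, le_div_iff₀ hc]
    linarith
  exact this.continuousOn


lemma hh_deriv (hn : 1 ≤ n) {s : ℝ} (hs : s ∈ Set.Ioo 0 (s1 n)) :
    HasDerivAt (hh n) (dd n s) s := by
  have hsI : s ∈ Set.Icc 0 (s1 n) := ⟨hs.1.le, hs.2.le⟩
  set τ := hh n s with hτdef
  have hτI := (hh_spec hn hsI).1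
  have hτpos : 0 < τ := hh_pos hn hsI hs.1
  have hlog := log_le_on τ hτpos hτI.2
  have hc := cc_pos hn
  have hp : cc n * (-Real.log (4 * π * τ) - 1) ≠ 0 := by nlinarith
  have hcont : ContinuousAt (hh n) s :=
    (hh_contOn hn).continuousAt (Icc_mem_nhds hs.1 hs.2)
  have hfg : ∀ᶠ y in nhds s, gg n (hh n y) = y := by
    filter_upwards [Ioo_mem_nhds hs.1 hs.2] with y hy
    exact (hh_spec hn ⟨hy.1.le, hy.2.le⟩).2
  have h := HasDerivAt.of_local_left_inverse hcont
    (by rw [← hτdef] at *; exact gg_deriv τ hτpos) hp hfg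
  have hd : dd n s = (cc n * (-Real.log (4 * π * τ) - 1))⁻¹ := by
    rw [dd, if_neg (not_le.2 hs.1)]
  rwa [hd]

lemma dd_pos (hn : 1 ≤ n) {s : ℝ} (hs : s ∈ Set.Ioo 0 (s1 n)) : 0 < dd n s := by
  have hsI : s ∈ Set.Icc 0 (s1 n) := ⟨hs.1.le, hs.2.le⟩
  have hτpos := hh_pos hn hsI hs.1
  have hlog := log_le_on _ hτpos (hh_spec hn hsI).1.2
  have hc := cc_pos hn
  rw [dd, if_neg (not_le.2 hs.1)]
  have : 0 < cc n * (-Real.log (4 * π * hh n s) - 1) := by nlinarith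
  positivity

lemma dd_deriv (hn : 1 ≤ n) {s : ℝ} (hs : s ∈ Set.Ioo 0 (s1 n)) :
    HasDerivAt (dd n) (ee n s) s := by
  have hsI : s ∈ Set.Icc 0 (s1 n) := ⟨hs.1.le, hs.2.le⟩
  set τ := hh n s with hτdef
  have hτI := (hh_spec hn hsI).1
  have hτpos : 0 < τ := hh_pos hn hsI hs.1
  have hlog := log_le_on τ hτpos hτI.2
  have hc := cc_pos hn
  have hp : cc n * (-Real.log (4 * π * τ) - 1) ≠ 0 := by nlinarith
  -- derivative of q ∘ hh where q τ = cc n * (-log (4πτ) - 1)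
  have hq : HasDerivAt (fun τ : ℝ => cc n * (-Real.log (4 * π * τ) - 1)) (cc n * (-τ⁻¹)) τ := by
    have h1 : HasDerivAt (fun τ : ℝ => Real.log (4 * π * τ)) τ⁻¹ τ := by
      have h2 : HasDerivAt (fun τ : ℝ => 4 * π * τ) (4 * π) τ := by
        simpa using (hasDerivAt_id τ).const_mul (4 * π)
      have h3 := (Real.hasDerivAt_log (by positivity : 4 * π * τ ≠ 0)).comp τ h2
      refine h3.congr_deriv ?_
      have : (4:ℝ) * π ≠ 0 := ne_of_gt pi4_pos
      field_simp
    exact ((h1.neg.sub_const 1).const_mul (cc n))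
  have hcomp := hq.comp s (hh_deriv hn hs)
  have hinv := hcomp.inv (show ((fun τ : ℝ => cc n * (-Real.log (4 * π * τ) - 1)) ∘ hh n) s ≠ 0 from hp)
  simp only [Function.comp] at hinv
  have heq : -(cc n * (-τ⁻¹) * dd n s) / (cc n * (-Real.log (4 * π * hh n s) - 1)) ^ 2 = ee n s := by
    have hd : dd n s = (cc n * (-Real.log (4 * π * τ) - 1))⁻¹ := by
      rw [dd, if_neg (not_le.2 hs.1)]
    rw [ee, if_neg (not_le.2 hs.1), hd, ← hτdef]
    rw [eq_div_iff (ne_of_gt hτpos)]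
    field_simp
  rw [heq] at hinv
  refine hinv.congr_of_eventuallyEq ?_
  filter_upwards [Ioo_mem_nhds hs.1 hs.2] with y hy
  rw [dd, if_neg (not_le.2 hy.1)]
  rfl

/-- Quantitative smallness: for any `M ≥ 1` there is `δ` such that for `0 < s < δ`
the quantity `-log(4π hh s) - 1` is at least `M`. -/
lemma key_small (hn : 1 ≤ n) {M : ℝ} (hM : 1 ≤ M) :
    ∃ δ > 0, δ ≤ s1 n ∧ ∀ s : ℝ, 0 < s → s < δ →
      M ≤ -Real.log (4 * π * hh n s) - 1 := by
  have hc := cc_pos hn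
  refine ⟨min (s1 n) (2 * cc n * ((4 * π)⁻¹ * Real.exp (-(1 + M)))), ?_, min_le_left _ _, ?_⟩
  · have := pi4_pos
    have := Real.exp_pos (-(1 + M))
    have := s1_pos hn
    positivity
  · intro s hs0 hsδ
    have hs1 : s ≤ s1 n := le_trans hsδ.le (min_le_left _ _)
    have hsI : s ∈ Set.Icc 0 (s1 n) := ⟨hs0.le, hs1⟩
    have hτpos := hh_pos hn hsI hs0
    have hle := hh_le hn hsI
    have h2 : s < 2 * cc n * ((4 * π)⁻¹ * Real.exp (-(1 + M))) :=
      lt_of_lt_of_le hsδ (min_le_right _ _)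
    have h3 : hh n s < (4 * π)⁻¹ * Real.exp (-(1 + M)) := by nlinarith
    have h4 : 4 * π * hh n s < Real.exp (-(1 + M)) := by
      have hπ := pi4_pos
      rw [inv_mul_eq_div] at h3
      calc 4 * π * hh n s < 4 * π * (Real.exp (-(1 + M)) / (4 * π)) := by
            apply mul_lt_mul_of_pos_left _ hπ; linarith
      _ = Real.exp (-(1 + M)) := by field_simp
    have h5 : Real.log (4 * π * hh n s) < -(1 + M) := by
      rw [Real.log_lt_iff_lt_exp (by positivity)]
      exact h4
    linarith


lemma ed_bound (hn : 1 ≤ n) {M : ℝ} (hM : 1 ≤ M) :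
    ∃ δ > 0, ∀ s : ℝ, 0 < s → s < δ →
      0 < dd n s ∧ dd n s ≤ (cc n * M)⁻¹ ∧ 0 ≤ ee n s ∧ ee n s * s ≤ 2 / M ^ 2 := by
  have hc := cc_pos hn
  have hc2 := cc_ge hn
  obtain ⟨δ, hδ, hδs1, hkey⟩ := key_small hn hM
  refine ⟨δ, hδ, fun s hs0 hsδ => ?_⟩
  have hsIoo : s ∈ Set.Ioo 0 (s1 n) := ⟨hs0, lt_of_lt_of_le hsδ hδs1⟩
  have hsI : s ∈ Set.Icc 0 (s1 n) := ⟨hs0.le, hsIoo.2.le⟩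
  set H := hh n s with hHdef
  set y := -Real.log (4 * π * H) - 1 with hydef
  have hy : M ≤ y := hkey s hs0 hsδ
  have hy1 : 1 ≤ y := le_trans hM hy
  have hHpos : 0 < H := hh_pos hn hsI hs0
  have hdd : dd n s = (cc n * y)⁻¹ := by rw [dd, if_neg (not_le.2 hs0)]
  have hddpos : 0 < dd n s := by rw [hdd]; positivity
  refine ⟨hddpos, ?_, ?_, ?_⟩
  · rw [hdd]
    apply inv_anti₀ (by positivity)
    exact mul_le_mul_of_nonneg_left hy hc.le
  · rw [ee, if_neg (not_le.2 hs0)]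
    positivity
  · have hsval : s = cc n * (H * (y + 1)) := by
      have h2 := (hh_spec hn hsI).2
      rw [gg_eq] at h2
      rw [← h2, ← hHdef, hydef]
      ring
    have heq : ee n s * s = (y + 1) / (cc n * y ^ 3) := by
      rw [ee, if_neg (not_le.2 hs0), hdd, ← hHdef]
      rw [hsval]
      have hyne : cc n * y ≠ 0 := by positivity
      field_simp
    rw [heq, div_le_div_iff₀ (by positivity) (by positivity)]
    have hyp : (0:ℝ) < y := lt_of_lt_of_le one_pos hy1
    have h1 : y + 1 ≤ 2 * y := by linarith
    have h2 : M ^ 2 ≤ y ^ 2 := by nlinarith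
    have h3 : (y + 1) * M ^ 2 ≤ 2 * y * y ^ 2 := by
      have ha := mul_le_mul_of_nonneg_right h1 (sq_nonneg M)
      have hb := mul_le_mul_of_nonneg_left h2 (by positivity : (0:ℝ) ≤ 2 * y)
      linarith
    have h4 : 2 * y * y ^ 2 ≤ 2 * (cc n * y ^ 3) := by nlinarith [mul_nonneg (by linarith : (0:ℝ) ≤ cc n - 1) (pow_nonneg hyp.le 3)]
    linarith


section Euclid
variable (n : ℕ)

local notation "E" => EuclideanSpace ℝ (Fin n)

def isl : EuclideanSpace ℝ (Fin n) →L[ℝ] EuclideanSpace ℝ (Fin n) →L[ℝ] ℝ := innerSL ℝ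

def Phi (x : E) : ℝ := -hh n (‖x‖ ^ 2)

def Gm (x : E) : E →L[ℝ] ℝ := (-2 * dd n (‖x‖ ^ 2)) • innerSL ℝ x

def Bm (x : E) : E →L[ℝ] E →L[ℝ] ℝ :=
  (-2 * dd n (‖x‖ ^ 2)) • isl n +
    (-4 * ee n (‖x‖ ^ 2)) • ((innerSL ℝ x).smulRight (innerSL ℝ x))

variable {n}

lemma dd_zero : dd n 0 = 0 := by rw [dd, if_pos le_rfl]

lemma Gm_zero : Gm n 0 = 0 := by
  ext y; simp [Gm]

lemma Bm_zero : Bm n 0 = 0 := by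
  ext u w
  simp [Bm, dd_zero]

lemma sq_norm_lt {x : E} {r : ℝ} (h : ‖x‖ < Real.sqrt r) (hr : 0 ≤ r) : ‖x‖ ^ 2 < r := by
  have h2 : ‖x‖ ^ 2 < Real.sqrt r ^ 2 := by
    apply pow_lt_pow_left₀ h (norm_nonneg x)
    norm_num
  rwa [Real.sq_sqrt hr] at h2

lemma Phi_deriv (hn : 1 ≤ n) {x : E} (hx : ‖x‖ ^ 2 < s1 n) :
    HasFDerivAt (Phi n) (Gm n x) x := by
  rcases eq_or_ne x 0 with rfl | hx0
  · rw [Gm_zero]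
    rw [hasFDerivAt_iff_isLittleO_nhds_zero]
    rw [Asymptotics.isLittleO_iff]
    intro C hC
    have hr : 0 < min (Real.sqrt (s1 n)) C := lt_min (Real.sqrt_pos.2 (s1_pos hn)) hC
    filter_upwards [Metric.ball_mem_nhds 0 hr] with h hmem
    rw [mem_ball_zero_iff] at hmem
    have hs1 : ‖h‖ ^ 2 < s1 n :=
      sq_norm_lt (lt_of_lt_of_le hmem (min_le_left _ _)) (s1_pos hn).le
    have hsI : ‖h‖ ^ 2 ∈ Set.Icc 0 (s1 n) := ⟨sq_nonneg _, hs1.le⟩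
    have hnn := (hh_spec hn hsI).1.1
    have hle := hh_le hn hsI
    have hc := cc_ge hn
    simp only [Phi, zero_add, ContinuousLinearMap.zero_apply, norm_zero, sub_zero]
    rw [show (0:ℝ) ^ 2 = 0 from by norm_num, hh_zero hn, neg_zero, sub_zero,
      Real.norm_eq_abs, abs_neg, abs_of_nonneg hnn]
    have h1 : hh n (‖h‖ ^ 2) ≤ ‖h‖ ^ 2 := by nlinarith
    have h2 : ‖h‖ ^ 2 ≤ C * ‖h‖ := by
      have := lt_of_lt_of_le hmem (min_le_right _ _)
      nlinarith [norm_nonneg h]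
    linarith
  · have hs : ‖x‖ ^ 2 ∈ Set.Ioo 0 (s1 n) := ⟨pow_pos (norm_pos_iff.2 hx0) 2, hx⟩
    have h1 : HasFDerivAt (fun y : E => ‖y‖ ^ 2) (2 • (innerSL ℝ x)) x :=
      (hasStrictFDerivAt_norm_sq x).hasFDerivAt
    have h2 := ((hh_deriv hn hs).comp_hasFDerivAt x h1).neg
    have heq : -(dd n (‖x‖ ^ 2) • (2 • (innerSL ℝ x))) = Gm n x := by
      ext y
      simp [Gm, innerSL_apply_apply]
      ring
    rw [heq] at h2
    exact h2

lemma Gm_deriv (hn : 1 ≤ n) {x : E} (hx : ‖x‖ ^ 2 < s1 n) :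
    HasFDerivAt (Gm n) (Bm n x) x := by
  rcases eq_or_ne x 0 with rfl | hx0
  · rw [Bm_zero]
    rw [hasFDerivAt_iff_isLittleO_nhds_zero]
    rw [Asymptotics.isLittleO_iff]
    intro C hC
    have hc := cc_pos hn
    set M : ℝ := max 1 (2 / (cc n * C)) with hM
    have hM1 : 1 ≤ M := le_max_left _ _
    obtain ⟨δ, hδ, hbnd⟩ := ed_bound hn hM1
    filter_upwards [Metric.ball_mem_nhds 0 (Real.sqrt_pos.2 hδ)] with h hmem
    rw [mem_ball_zero_iff] at hmem
    rcases eq_or_ne h 0 with rfl | hh0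
    · simp [Gm_zero]
    · have hsδ : ‖h‖ ^ 2 < δ := sq_norm_lt hmem hδ.le
      have hs0 : 0 < ‖h‖ ^ 2 := pow_pos (norm_pos_iff.2 hh0) 2
      obtain ⟨hdp, hdle, _, _⟩ := hbnd _ hs0 hsδ
      simp only [zero_add, Gm_zero, ContinuousLinearMap.zero_apply, sub_zero]
      have hnorm : ‖Gm n h‖ = 2 * dd n (‖h‖ ^ 2) * ‖h‖ := by
        have h1 := norm_smul (-2 * dd n (‖h‖ ^ 2)) (innerSL ℝ h)
        rw [innerSL_apply_norm] at h1
        rw [show Gm n h = (-2 * dd n (‖h‖ ^ 2)) • innerSL ℝ h from rfl, h1,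
          Real.norm_eq_abs, abs_of_nonpos (by linarith)]
        ring
      rw [hnorm]
      have hcm : 0 < cc n * M := by positivity
      have hMC : 2 * dd n (‖h‖ ^ 2) ≤ C := by
        have h1 : 2 / (cc n * C) ≤ M := le_max_right _ _
        rw [div_le_iff₀ (by positivity)] at h1
        have h3 : (cc n * M)⁻¹ ≤ C / 2 := by
          rw [inv_eq_one_div, div_le_div_iff₀ hcm (by norm_num : (0:ℝ) < 2)]
          nlinarith
        linarith
      nlinarith [norm_nonneg h, mul_le_mul_of_nonneg_right hMC (norm_nonneg h)]
  · have hs : ‖x‖ ^ 2 ∈ Set.Ioo 0 (s1 n) := ⟨pow_pos (norm_pos_iff.2 hx0) 2, hx⟩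
    have h1 : HasFDerivAt (fun y : E => ‖y‖ ^ 2) (2 • (innerSL ℝ x)) x :=
      (hasStrictFDerivAt_norm_sq x).hasFDerivAt
    have ha : HasFDerivAt (fun y : E => -2 * dd n (‖y‖ ^ 2))
        ((-2 : ℝ) • (ee n (‖x‖ ^ 2) • (2 • (innerSL ℝ x)))) x :=
      ((dd_deriv hn hs).comp_hasFDerivAt x h1).const_mul (-2)
    have hv : HasFDerivAt (fun y : E => innerSL ℝ y) (isl n) x :=
      (isl n).hasFDerivAt
    have hprod := ha.smul hv
    have heq : (-2 * dd n (‖x‖ ^ 2)) • isl n +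
        ((-2 : ℝ) • (ee n (‖x‖ ^ 2) • (2 • (innerSL ℝ x)))).smulRight (innerSL ℝ x) = Bm n x := by
      ext u w
      simp [Bm, isl, innerSL_apply_apply]
      ring
    rw [heq] at hprod
    exact hprod


lemma Bm_cont (hn : 1 ≤ n) : ContinuousOn (Bm n) {x : E | ‖x‖ ^ 2 < s1 n} := by
  intro x hx
  rcases eq_or_ne x 0 with rfl | hx0
  · -- continuity at 0 via quantitative bounds
    refine (Metric.continuousWithinAt_iff (f := Bm n)).mpr ?_
    intro C hC
    have hc := cc_ge hn
    set M : ℝ := max 1 (18 / C) with hMdef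
    have hM1 : (1:ℝ) ≤ M := le_max_left _ _
    have hM0 : (0:ℝ) < M := lt_of_lt_of_le one_pos hM1
    have hCM : 18 ≤ C * M := by
      have h1 : 18 / C ≤ M := le_max_right _ _
      rw [div_le_iff₀ hC] at h1
      linarith
    obtain ⟨δ, hδ, hbnd⟩ := ed_bound hn hM1
    refine ⟨Real.sqrt δ, Real.sqrt_pos.2 hδ, ?_⟩
    intro y hyS hydist
    rw [Bm_zero]
    refine (dist_zero_right (Bm n y)).trans_lt ?_
    rcases eq_or_ne y 0 with rfl | hy0
    · rw [Bm_zero, ContinuousLinearMap.opNorm_zero]; exact hC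
    · rw [dist_zero_right] at hydist
      have hsδ : ‖y‖ ^ 2 < δ := sq_norm_lt hydist hδ.le
      have hs0 : 0 < ‖y‖ ^ 2 := pow_pos (norm_pos_iff.2 hy0) 2
      obtain ⟨hdp, hdle, heenn, heele⟩ := hbnd _ hs0 hsδ
      have hisl : ‖isl n‖ ≤ 1 := by
        apply ContinuousLinearMap.opNorm_le_bound _ zero_le_one
        intro u
        rw [show isl n u = innerSL ℝ u from rfl, innerSL_apply_norm, one_mul]
      have hA : ‖(-2 * dd n (‖y‖ ^ 2)) • isl n‖ ≤ 2 * dd n (‖y‖ ^ 2) := by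
        refine le_trans (ContinuousLinearMap.opNorm_smul_le _ _) ?_
        rw [Real.norm_eq_abs, abs_of_nonpos (by linarith)]
        nlinarith
      have hB : ‖(-4 * ee n (‖y‖ ^ 2)) • ((innerSL ℝ y).smulRight (innerSL ℝ y))‖ ≤
          4 * (ee n (‖y‖ ^ 2) * ‖y‖ ^ 2) := by
        refine le_trans (ContinuousLinearMap.opNorm_smul_le _ _) ?_
        rw [ContinuousLinearMap.norm_smulRight_apply, innerSL_apply_norm,
          Real.norm_eq_abs, abs_of_nonpos (by linarith)]
        nlinarith
      have hsum : ‖Bm n y‖ ≤ 2 * dd n (‖y‖ ^ 2) + 4 * (ee n (‖y‖ ^ 2) * ‖y‖ ^ 2) :=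
        le_trans (ContinuousLinearMap.opNorm_add_le _ _) (add_le_add hA hB)
      have h2dd : 2 * dd n (‖y‖ ^ 2) ≤ 1 / M := by
        have h1 : (cc n * M)⁻¹ ≤ (2 * M)⁻¹ := by
          apply inv_anti₀ (by positivity)
          nlinarith
        have h2 : 2 * (2 * M)⁻¹ = 1 / M := by field_simp
        linarith [hdle]
      have h4ee : 4 * (ee n (‖y‖ ^ 2) * ‖y‖ ^ 2) ≤ 8 / M ^ 2 := by
        rw [show (8:ℝ) / M ^ 2 = 4 * (2 / M ^ 2) from by ring]
        linarith
      have hfin : 1 / M + 8 / M ^ 2 < C := by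
        rw [div_add_div _ _ (by positivity) (by positivity), div_lt_iff₀ (by positivity)]
        nlinarith [mul_le_mul_of_nonneg_right hCM (sq_nonneg M), sq_nonneg M,
          mul_le_mul_of_nonneg_left hM1 hM0.le]
      calc ‖Bm n y‖ ≤ 2 * dd n (‖y‖ ^ 2) + 4 * (ee n (‖y‖ ^ 2) * ‖y‖ ^ 2) := hsum
      _ ≤ 1 / M + 8 / M ^ 2 := by linarith
      _ < C := hfin
  · apply ContinuousAt.continuousWithinAt
    have hs : ‖x‖ ^ 2 ∈ Set.Ioo 0 (s1 n) := ⟨pow_pos (norm_pos_iff.2 hx0) 2, hx⟩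
    have hsq : ContinuousAt (fun y : E => ‖y‖ ^ 2) x := (continuous_norm.pow 2).continuousAt
    have hddc : ContinuousAt (fun y : E => dd n (‖y‖ ^ 2)) x := by
      show ContinuousAt (dd n ∘ fun y : E => ‖y‖ ^ 2) x
      exact ContinuousAt.comp ((dd_deriv hn hs).continuousAt) hsq
    have heec : ContinuousAt (fun y : E => ee n (‖y‖ ^ 2)) x := by
      have h1 : ContinuousAt (ee n) (‖x‖ ^ 2) := by
        have h2 : ContinuousAt (fun y : ℝ => cc n * dd n y ^ 3 / hh n y) (‖x‖ ^ 2) := by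
          apply ContinuousAt.div
          · exact ((dd_deriv hn hs).continuousAt.pow 3).const_mul (cc n)
          · exact (hh_deriv hn hs).continuousAt
          · exact ne_of_gt (hh_pos hn ⟨hs.1.le, hs.2.le⟩ hs.1)
        apply h2.congr
        filter_upwards [Ioo_mem_nhds hs.1 hs.2] with y hy
        rw [ee, if_neg (not_le.2 hy.1)]
      show ContinuousAt (ee n ∘ fun y : E => ‖y‖ ^ 2) x
      exact ContinuousAt.comp h1 hsq
    have hsr : ContinuousAt (fun y : E => (innerSL ℝ y).smulRight (innerSL ℝ y)) x := by
      have hb := (isBoundedBilinearMap_smulRight :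
        IsBoundedBilinearMap ℝ fun p : (E →L[ℝ] ℝ) × (E →L[ℝ] ℝ) => p.1.smulRight p.2).continuous
      exact (hb.comp ((isl n).continuous.prodMk (isl n).continuous)).continuousAt
    exact ((hddc.const_mul (-2)).smul continuousAt_const).add
      ((heec.const_mul (-4)).smul hsr)

end Euclid
end HBG5

/-- near the origin, the boundary of `E(1)` is the graph of a `C²`
function whose value, gradient and Hessian vanish at `0`. -/
theorem heatBall_boundary_graph (n : ℕ) (hn : 1 ≤ n) :
    ∃ ε > (0 : ℝ), ∃ Φ : EuclideanSpace ℝ (Fin n) → ℝ,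
      ContDiffOn ℝ 2 Φ (Metric.ball (0 : EuclideanSpace ℝ (Fin n)) ε) ∧
      Φ 0 = 0 ∧
      iteratedFDerivWithin ℝ 1 Φ (Metric.ball (0 : EuclideanSpace ℝ (Fin n)) ε) 0 = 0 ∧
      iteratedFDerivWithin ℝ 2 Φ (Metric.ball (0 : EuclideanSpace ℝ (Fin n)) ε) 0 = 0 ∧
      (∀ x ∈ Metric.ball (0 : EuclideanSpace ℝ (Fin n)) ε, Φ x ≤ 0) ∧
      ∀ (x : EuclideanSpace ℝ (Fin n)) (t : ℝ), ‖x‖ < ε → -ε ^ 2 < t → t < 0 →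
        ((x, t) ∈ heatBall n ((0 : EuclideanSpace ℝ (Fin n)), (0 : ℝ)) 1 ↔ t ≤ Φ x) := by
  have hε : 0 < Real.sqrt HBG5.tau1 := Real.sqrt_pos.2 HBG5.tau1_pos
  have hε2 : Real.sqrt HBG5.tau1 ^ 2 = HBG5.tau1 := Real.sq_sqrt HBG5.tau1_pos.le
  set U := Metric.ball (0 : EuclideanSpace ℝ (Fin n)) (Real.sqrt HBG5.tau1) with hUdef
  have hball : ∀ x : EuclideanSpace ℝ (Fin n), x ∈ U → ‖x‖ ^ 2 < HBG5.s1 n := by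
    intro x hx
    rw [hUdef, mem_ball_zero_iff] at hx
    exact lt_trans (HBG5.sq_norm_lt hx HBG5.tau1_pos.le) (HBG5.tau1_lt_s1 hn)
  have h0mem : (0 : EuclideanSpace ℝ (Fin n)) ∈ U := Metric.mem_ball_self hε
  have hud : UniqueDiffOn ℝ U := Metric.isOpen_ball.uniqueDiffOn
  refine ⟨Real.sqrt HBG5.tau1, hε, HBG5.Phi n, ?_, ?_, ?_, ?_, ?_, ?_⟩
  · -- C² regularity
    have hG : ContDiffOn ℝ 1 (HBG5.Gm n) U := by
      rw [show (1 : WithTop ℕ∞) = 0 + 1 from (zero_add 1).symm,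
        contDiffOn_succ_iff_fderiv_of_isOpen Metric.isOpen_ball]
      refine ⟨fun x hx =>
        ((HBG5.Gm_deriv hn (hball x hx)).differentiableAt).differentiableWithinAt, by simp, ?_⟩
      rw [contDiffOn_zero]
      exact ((HBG5.Bm_cont hn).mono (fun x hx => hball x hx)).congr
        (fun x hx => (HBG5.Gm_deriv hn (hball x hx)).fderiv)
    rw [show (2 : WithTop ℕ∞) = 1 + 1 from (one_add_one_eq_two).symm,
      contDiffOn_succ_iff_fderiv_of_isOpen Metric.isOpen_ball]
    refine ⟨fun x hx =>
      ((HBG5.Phi_deriv hn (hball x hx)).differentiableAt).differentiableWithinAt, by simp, ?_⟩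
    exact hG.congr (fun x hx => (HBG5.Phi_deriv hn (hball x hx)).fderiv)
  · -- Φ(0) = 0
    rw [HBG5.Phi, norm_zero, show (0:ℝ) ^ 2 = 0 from by norm_num, HBG5.hh_zero hn, neg_zero]
  · -- first derivative vanishes at 0
    apply ContinuousMultilinearMap.ext
    intro m
    rw [iteratedFDerivWithin_one_apply (hud 0 h0mem)]
    have h1 : fderivWithin ℝ (HBG5.Phi n) U 0 = HBG5.Gm n 0 :=
      ((HBG5.Phi_deriv hn (hball 0 h0mem)).hasFDerivWithinAt).fderivWithin (hud 0 h0mem)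
    rw [h1, HBG5.Gm_zero]
    simp
  · -- second derivative vanishes at 0
    apply ContinuousMultilinearMap.ext
    intro m
    rw [iteratedFDerivWithin_two_apply _ hud h0mem]
    have hcongr : fderivWithin ℝ (fderivWithin ℝ (HBG5.Phi n) U) U 0 =
        fderivWithin ℝ (HBG5.Gm n) U 0 := by
      apply fderivWithin_congr
      · intro y hy
        exact ((HBG5.Phi_deriv hn (hball y hy)).hasFDerivWithinAt).fderivWithin (hud y hy)
      · exact ((HBG5.Phi_deriv hn (hball 0 h0mem)).hasFDerivWithinAt).fderivWithin (hud 0 h0mem)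
    have h2 : fderivWithin ℝ (HBG5.Gm n) U 0 = HBG5.Bm n 0 :=
      ((HBG5.Gm_deriv hn (hball 0 h0mem)).hasFDerivWithinAt).fderivWithin (hud 0 h0mem)
    rw [hcongr, h2, HBG5.Bm_zero]
    simp
  · -- Φ ≤ 0
    intro x hx
    have hSI : ‖x‖ ^ 2 ∈ Set.Icc 0 (HBG5.s1 n) := ⟨sq_nonneg _, (hball x hx).le⟩
    rw [HBG5.Phi]
    have := (HBG5.hh_spec hn hSI).1.1
    linarith
  · -- the boundary characterization
    intro x t hx ht1 ht2
    have hτ0 : 0 < -t := by linarith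
    have hτ1 : -t < HBG5.tau1 := by rw [← hε2]; linarith
    have hsq : ‖x‖ ^ 2 < HBG5.tau1 := HBG5.sq_norm_lt hx HBG5.tau1_pos.le
    have hSI : ‖x‖ ^ 2 ∈ Set.Icc 0 (HBG5.s1 n) :=
      ⟨sq_nonneg _, (lt_trans hsq (HBG5.tau1_lt_s1 hn)).le⟩
    have hτI : -t ∈ Set.Icc 0 HBG5.tau1 := ⟨hτ0.le, hτ1.le⟩
    have hA : 0 < (4 * π * -t) ^ (-(n:ℝ)/2) := Real.rpow_pos_of_pos (by positivity) _
    have hmem : (x, t) ∈ heatBall n ((0 : EuclideanSpace ℝ (Fin n)), (0:ℝ)) 1 ↔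
        (1:ℝ) ≤ (4 * π * -t) ^ (-(n:ℝ)/2) * Real.exp (-‖-x‖ ^ 2 / (4 * -t)) := by
      simp only [heatBall, Set.mem_setOf_eq, zero_sub]
      rw [heatF, if_pos hτ0]
    rw [hmem, norm_neg]
    have key : (1:ℝ) ≤ (4 * π * -t) ^ (-(n:ℝ)/2) * Real.exp (-‖x‖ ^ 2 / (4 * -t)) ↔
        ‖x‖ ^ 2 ≤ HBG5.gg n (-t) := by
      constructor
      · intro H
        have hlog := Real.log_nonneg H
        rw [Real.log_mul hA.ne' (Real.exp_ne_zero _), Real.log_exp,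
          Real.log_rpow (by positivity),
          show -‖x‖ ^ 2 / (4 * -t) = -(‖x‖ ^ 2 / (4 * -t)) from neg_div _ _] at hlog
        rw [HBG5.gg_eq, HBG5.cc]
        have h1 : ‖x‖ ^ 2 / (4 * -t) ≤ -(n:ℝ)/2 * Real.log (4 * π * -t) := by linarith
        have h2 := (div_le_iff₀ (by positivity : (0:ℝ) < 4 * -t)).1 h1
        calc ‖x‖ ^ 2 ≤ -(n:ℝ)/2 * Real.log (4 * π * -t) * (4 * -t) := h2
        _ = 2 * (n:ℝ) * -t * -Real.log (4 * π * -t) := by ring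
      · intro H
        rw [HBG5.gg_eq, HBG5.cc] at H
        have h1 : ‖x‖ ^ 2 / (4 * -t) ≤ -(n:ℝ)/2 * Real.log (4 * π * -t) := by
          rw [div_le_iff₀ (by positivity : (0:ℝ) < 4 * -t)]
          calc ‖x‖ ^ 2 ≤ 2 * (n:ℝ) * -t * -Real.log (4 * π * -t) := H
          _ = -(n:ℝ)/2 * Real.log (4 * π * -t) * (4 * -t) := by ring
        have hlogv : 0 ≤ -(n:ℝ)/2 * Real.log (4 * π * -t) + (-‖x‖ ^ 2 / (4 * -t)) := by
          rw [show -‖x‖ ^ 2 / (4 * -t) = -(‖x‖ ^ 2 / (4 * -t)) from neg_div _ _]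
          linarith
        calc (1:ℝ) = Real.exp 0 := Real.exp_zero.symm
        _ ≤ Real.exp (-(n:ℝ)/2 * Real.log (4 * π * -t) + (-‖x‖ ^ 2 / (4 * -t))) :=
            Real.exp_le_exp.2 hlogv
        _ = (4 * π * -t) ^ (-(n:ℝ)/2) * Real.exp (-‖x‖ ^ 2 / (4 * -t)) := by
            rw [Real.exp_add, ← Real.log_rpow (by positivity : (0:ℝ) < 4 * π * -t),
              Real.exp_log hA]
    rw [key, HBG5.hh_mono_iff hn hSI hτI, HBG5.Phi]
    constructor <;> intro <;> linarith


end
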